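/- Let σ be a length-minimal solution of a word equation U = V (assume both U and V begin and end with a letter). If a^k is a maximal block of the letter a in σ(U) (an occurrence of a^k not extendable by a on either side), then a^k has an occurrence in σ(U) or σ(V) that is explicit or crossing, or is a prefix or suffix of σ(X) for some variable X (i.e., the length k is 'visible'). -/

import Mathlib

variable {Γ 𝒳 : Type*}

def subApp (σ : 𝒳 → List Γ) (w : List (Γ ⊕ 𝒳)) : List Γ :=
  w.flatMap (Sum.elim (fun a => [a]) σ)

def occursAt (s p : List Γ) (i : ℕ) : Prop :=
  i + p.length ≤ s.length ∧ (s.drop i).take p.length = p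

/-- `a^k` occurs at position `i` of `s` as a maximal block: it cannot be extended
by the letter `a` on either side. -/
def maxBlockAt (s : List Γ) (a : Γ) (k i : ℕ) : Prop :=
  occursAt s (List.replicate k a) i ∧
  (∀ p, p + 1 = i → s[p]? ≠ some a) ∧ s[i + k]? ≠ some a

def explicitAt (σ : 𝒳 → List Γ) (U : List (Γ ⊕ 𝒳)) (i len : ℕ) : Prop :=
  ∀ p, i ≤ p → p < i + len →
    ∃ (j : ℕ) (x : Γ), U[j]? = some (Sum.inl x) ∧ (subApp σ (U.take j)).length = p

def implicitAt (σ : 𝒳 → List Γ) (U : List (Γ ⊕ 𝒳)) (i len : ℕ) : Prop :=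
  ∃ (j : ℕ) (X : 𝒳), U[j]? = some (Sum.inr X) ∧
    (subApp σ (U.take j)).length ≤ i ∧ i + len ≤ (subApp σ (U.take (j + 1))).length

set_option linter.unusedSectionVars false
set_option linter.unusedVariables false

section Aux
variable [DecidableEq Γ] (a : Γ) (k : ℕ)

def lead : List Γ → ℕ
  | [] => 0
  | x :: t => if x = a then lead t + 1 else 0

def delrun (u : List Γ) : List Γ := if lead a u = k then u.drop k else u

def hD : List Γ → List Γ
  | [] => []
  | x :: t => if x = a then a :: hD t else x :: delrun a k (hD t)

variable {a k}

@[simp] lemma lead_nil : lead a ([] : List Γ) = 0 := rfl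
@[simp] lemma lead_cons_self (t : List Γ) : lead a (a :: t) = lead a t + 1 := by
  simp [lead]
lemma lead_cons_ne {x : Γ} (hx : x ≠ a) (t : List Γ) : lead a (x :: t) = 0 := by
  simp [lead, hx]
@[simp] lemma hD_nil : hD a k ([] : List Γ) = [] := rfl
@[simp] lemma hD_cons_self (t : List Γ) : hD a k (a :: t) = a :: hD a k t := by
  simp [hD]
lemma hD_cons_ne {x : Γ} (hx : x ≠ a) (t : List Γ) :
    hD a k (x :: t) = x :: delrun a k (hD a k t) := by
  simp [hD, hx]
@[simp] lemma delrun_nil : delrun a k ([] : List Γ) = [] := by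
  unfold delrun; split <;> simp

lemma lead_le_length (u : List Γ) : lead a u ≤ u.length := by
  induction u with
  | nil => simp
  | cons x t ih =>
    by_cases hx : x = a
    · subst hx; simp; omega
    · rw [lead_cons_ne hx]; simp

lemma take_lead_eq (u : List Γ) : ∀ (m : ℕ), m ≤ lead a u → u.take m = List.replicate m a := by
  induction u with
  | nil => intro m hm; simp at hm; simp [hm]
  | cons x t ih =>
    intro m hm
    cases m with
    | zero => simp
    | succ m' =>
      by_cases hx : x = a
      · subst hx
        rw [lead_cons_self] at hm
        rw [List.take_succ_cons, List.replicate_succ, ih m' (by omega)]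
      · rw [lead_cons_ne hx] at hm; omega

lemma lead_ge_of_take (u : List Γ) : ∀ (m : ℕ), u.take m = List.replicate m a → m ≤ lead a u := by
  induction u with
  | nil => intro m hm; simp at hm; omega
  | cons x t ih =>
    intro m hm
    cases m with
    | zero => omega
    | succ m' =>
      rw [List.take_succ_cons, List.replicate_succ] at hm
      injection hm with h1 h2
      subst h1
      rw [lead_cons_self]
      exact Nat.succ_le_succ (ih m' h2)

lemma getElem_lead (u : List Γ) : u[lead a u]? ≠ some a := by
  induction u with
  | nil => simp
  | cons x t ih =>
    by_cases hx : x = a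
    · subst hx; simpa using ih
    · rw [lead_cons_ne hx]; simpa using hx

lemma get_lt_lead (u : List Γ) : ∀ (m : ℕ), m < lead a u → u[m]? = some a := by
  induction u with
  | nil => simp
  | cons x t ih =>
    intro m hm
    by_cases hx : x = a
    · subst hx
      cases m with
      | zero => simp
      | succ m' =>
        rw [lead_cons_self] at hm
        simpa using ih m' (by omega)
    · rw [lead_cons_ne hx] at hm; omega

lemma lead_replicate (n : ℕ) : lead a (List.replicate n a) = n := by
  induction n with
  | zero => simp
  | succ n ih => rw [List.replicate_succ, lead_cons_self, ih]

lemma lead_replicate_append (t : ℕ) (u : List Γ) :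
    lead a (List.replicate t a ++ u) = t + lead a u := by
  induction t with
  | zero => simp
  | succ n ih => rw [List.replicate_succ, List.cons_append, lead_cons_self, ih]; omega

lemma lead_append_of_exists (u : List Γ) (h : ∃ b ∈ u, b ≠ a) (z : List Γ) :
    lead a (u ++ z) = lead a u := by
  induction u with
  | nil => simp at h
  | cons x t ih =>
    by_cases hx : x = a
    · subst hx
      obtain ⟨b, hb, hba⟩ := h
      have hbt : b ∈ t := by
        rcases List.mem_cons.1 hb with h | h
        · exact absurd h hba
        · exact h
      rw [List.cons_append, lead_cons_self, lead_cons_self, ih ⟨b, hbt, hba⟩]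
    · rw [List.cons_append, lead_cons_ne hx, lead_cons_ne hx]

lemma lead_hD (u : List Γ) : lead a (hD a k u) = lead a u := by
  induction u with
  | nil => simp
  | cons x t ih =>
    by_cases hx : x = a
    · subst hx; rw [hD_cons_self, lead_cons_self, lead_cons_self, ih]
    · rw [hD_cons_ne hx, lead_cons_ne hx, lead_cons_ne hx]

lemma mem_delrun {b : Γ} (hb : b ≠ a) (u : List Γ) (hm : b ∈ u) : b ∈ delrun a k u := by
  unfold delrun
  split
  · rename_i h
    have htake : u.take k = List.replicate k a := take_lead_eq u k (le_of_eq h.symm)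
    have hsplit := List.take_append_drop k u
    rw [← hsplit] at hm
    rcases List.mem_append.1 hm with h1 | h1
    · rw [htake] at h1
      exact absurd (List.eq_of_mem_replicate h1) hb
    · exact h1
  · exact hm

lemma mem_hD {b : Γ} (hb : b ≠ a) (u : List Γ) (hm : b ∈ u) : b ∈ hD a k u := by
  induction u with
  | nil => simp at hm
  | cons x t ih =>
    by_cases hx : x = a
    · subst hx
      have hbt : b ∈ t := by
        rcases List.mem_cons.1 hm with h | h
        · exact absurd h hb
        · exact h
      rw [hD_cons_self]
      exact List.mem_cons_of_mem _ (ih hbt)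
    · rw [hD_cons_ne hx]
      rcases List.mem_cons.1 hm with h | h
      · exact h ▸ List.mem_cons_self
      · exact List.mem_cons_of_mem _ (mem_delrun hb _ (ih h))

lemma length_delrun_le (u : List Γ) : (delrun a k u).length ≤ u.length := by
  unfold delrun; split
  · simp
  · exact le_refl _

lemma length_hD_le (u : List Γ) : (hD a k u).length ≤ u.length := by
  induction u with
  | nil => simp
  | cons x t ih =>
    by_cases hx : x = a
    · subst hx; rw [hD_cons_self]; simpa using ih
    · rw [hD_cons_ne hx]
      simp only [List.length_cons]
      exact Nat.succ_le_succ (le_trans (length_delrun_le _) ih)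

lemma delrun_of_ne (u : List Γ) (h : lead a u ≠ k) : delrun a k u = u := if_neg h

lemma delrun_append (u z : List Γ) (h : ∃ b ∈ u, b ≠ a) :
    delrun a k (u ++ z) = delrun a k u ++ z := by
  unfold delrun
  rw [lead_append_of_exists u h z]
  split
  · rename_i hl
    have hk' : k ≤ u.length := hl ▸ lead_le_length u
    rw [List.drop_append_of_le_length hk']
  · rfl

lemma hD_replicate_append (t : ℕ) (w : List Γ) :
    hD a k (List.replicate t a ++ w) = List.replicate t a ++ hD a k w := by
  induction t with
  | zero => simp
  | succ n ih => rw [List.replicate_succ, List.cons_append, hD_cons_self, ih, List.cons_append]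

lemma hD_append_last {x : Γ} (hx : x ≠ a) (β : List Γ) :
    ∀ w : List Γ, hD a k (β ++ x :: w) = hD a k (β ++ [x]) ++ delrun a k (hD a k w) := by
  induction β with
  | nil =>
    intro w
    rw [List.nil_append, List.nil_append, hD_cons_ne hx, hD_cons_ne hx]
    simp
  | cons y β ih =>
    intro w
    by_cases hy : y = a
    · subst hy
      rw [List.cons_append, List.cons_append, hD_cons_self, hD_cons_self, ih w, List.cons_append]
    · rw [List.cons_append, List.cons_append, hD_cons_ne hy, hD_cons_ne hy, ih w]
      have hmem : ∃ b ∈ hD a k (β ++ [x]), b ≠ a :=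
        ⟨x, mem_hD hx _ (by simp), hx⟩
      rw [delrun_append _ _ hmem, List.cons_append]

end Aux

section Blocks
variable [DecidableEq Γ] {a : Γ} {k : ℕ}

lemma block_tail {w : List Γ} {x : Γ} {i : ℕ} (hb : maxBlockAt (x :: w) a k (i + 1)) :
    maxBlockAt w a k i := by
  obtain ⟨⟨hlen, htake⟩, hleft, hright⟩ := hb
  refine ⟨⟨?_, ?_⟩, ?_, ?_⟩
  · simp only [List.length_replicate, List.length_cons] at hlen ⊢; omega
  · rwa [List.drop_succ_cons] at htake
  · intro p hp
    have := hleft (p + 1) (by omega)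
    rwa [List.getElem?_cons_succ] at this
  · have := hright
    rwa [show i + 1 + k = (i + k) + 1 by omega, List.getElem?_cons_succ] at this

lemma block_append_left {v u : List Γ} {i : ℕ} (hi : 1 ≤ i) (hb : maxBlockAt v a k i) :
    maxBlockAt (u ++ v) a k (u.length + i) := by
  obtain ⟨⟨hlen, htake⟩, hleft, hright⟩ := hb
  refine ⟨⟨?_, ?_⟩, ?_, ?_⟩
  · simp only [List.length_replicate, List.length_append] at hlen ⊢; omega
  · rwa [List.drop_append, List.drop_eq_nil_of_le (Nat.le_add_right _ _), List.nil_append,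
      Nat.add_sub_cancel_left]
  · intro p hp
    have hp' : p = u.length + (i - 1) := by omega
    subst hp'
    rw [List.getElem?_append_right (by omega)]
    have := hleft (i - 1) (by omega)
    simpa using this
  · rw [show u.length + i + k = u.length + (i + k) by omega,
      List.getElem?_append_right (by omega)]
    simpa using hright

lemma block_zero_lead (hk : 1 ≤ k) {w : List Γ} (hb : maxBlockAt w a k 0) : lead a w = k := by
  obtain ⟨⟨hlen, htake⟩, _, hright⟩ := hb
  rw [List.drop_zero] at htake
  rw [List.length_replicate] at htake
  have h1 : k ≤ lead a w := lead_ge_of_take w k htake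
  by_contra hne
  have h2 : k < lead a w := by omega
  have := get_lt_lead w k h2
  rw [Nat.zero_add] at hright
  exact hright this

lemma block_one_of_lead {x : Γ} {w : List Γ} (hx : x ≠ a) (hl : lead a w = k) :
    maxBlockAt (x :: w) a k 1 := by
  refine ⟨⟨?_, ?_⟩, ?_, ?_⟩
  · have := lead_le_length (a := a) w
    simp only [List.length_replicate, List.length_cons]; omega
  · rw [List.drop_succ_cons, List.drop_zero, List.length_replicate]
    exact take_lead_eq w k (le_of_eq hl.symm)
  · intro p hp
    have hp' : p = 0 := by omega
    subst hp'
    simpa using hx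
  · rw [show 1 + k = k + 1 by omega, List.getElem?_cons_succ]
    exact hl ▸ getElem_lead w

lemma hD_length_lt (hk : 1 ≤ k) (w : List Γ) :
    ∀ i, 1 ≤ i → maxBlockAt w a k i → (hD a k w).length < w.length := by
  induction w with
  | nil =>
    intro i hi hb
    obtain ⟨⟨hlen, _⟩, _, _⟩ := hb
    simp only [List.length_replicate, List.length_nil] at hlen; omega
  | cons x t ih =>
    intro i hi hb
    obtain ⟨i', rfl⟩ : ∃ i', i = i' + 1 := ⟨i - 1, by omega⟩
    have hbt : maxBlockAt t a k i' := block_tail hb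
    by_cases hx : x = a
    · subst hx
      have hi' : 1 ≤ i' := by
        by_contra h
        have hz : i' = 0 := by omega
        subst hz
        exact hb.2.1 0 rfl (by simp)
      rw [hD_cons_self]
      simp only [List.length_cons]
      exact Nat.succ_lt_succ (ih i' hi' hbt)
    · rw [hD_cons_ne hx]
      simp only [List.length_cons]
      by_cases hi' : 1 ≤ i'
      · have h1 := ih i' hi' hbt
        have h2 := length_delrun_le (a := a) (k := k) (hD a k t)
        omega
      · have hz : i' = 0 := by omega
        subst hz
        have hlt : lead a t = k := block_zero_lead hk hbt
        have hlt2 : lead a (hD a k t) = k := by rw [lead_hD]; exact hlt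
        have hkt : k ≤ t.length := hlt ▸ lead_le_length t
        have hht := length_hD_le (a := a) (k := k) t
        unfold delrun
        rw [if_pos hlt2, List.length_drop]
        omega

end Blocks

section SubApp
variable {σ σ' : 𝒳 → List Γ}

lemma subApp_nil (σ : 𝒳 → List Γ) : subApp σ ([] : List (Γ ⊕ 𝒳)) = [] := rfl

lemma subApp_cons (σ : 𝒳 → List Γ) (s : Γ ⊕ 𝒳) (U : List (Γ ⊕ 𝒳)) :
    subApp σ (s :: U) = Sum.elim (fun x => [x]) σ s ++ subApp σ U := by
  simp [subApp]

lemma subApp_append (σ : 𝒳 → List Γ) (U V : List (Γ ⊕ 𝒳)) :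
    subApp σ (U ++ V) = subApp σ U ++ subApp σ V := by
  simp [subApp]

lemma subApp_inl (σ : 𝒳 → List Γ) (x : Γ) (U : List (Γ ⊕ 𝒳)) :
    subApp σ (Sum.inl x :: U) = x :: subApp σ U := by
  simp [subApp]

lemma subApp_inr (σ : 𝒳 → List Γ) (X : 𝒳) (U : List (Γ ⊕ 𝒳)) :
    subApp σ (Sum.inr X :: U) = σ X ++ subApp σ U := by
  simp [subApp]

lemma piece_len_pos (hne : ∀ X, σ X ≠ []) (s : Γ ⊕ 𝒳) :
    1 ≤ (Sum.elim (fun x => [x]) σ s).length := by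
  cases s with
  | inl x => simp
  | inr X => simpa [Nat.one_le_iff_ne_zero] using hne X

lemma subApp_take_len_lower (hne : ∀ X, σ X ≠ []) :
    ∀ (U : List (Γ ⊕ 𝒳)) (j : ℕ), j ≤ U.length → j ≤ (subApp σ (U.take j)).length := by
  intro U
  induction U with
  | nil => intro j hj; simp at hj; simp [hj, subApp_nil]
  | cons s U ih =>
    intro j hj
    cases j with
    | zero => simp
    | succ j' =>
      rw [List.take_succ_cons, subApp_cons, List.length_append]
      have h1 := piece_len_pos hne s
      have h2 := ih j' (by simpa using hj)
      omega

lemma implicit_tail {s : Γ ⊕ 𝒳} {U : List (Γ ⊕ 𝒳)} {i k : ℕ} (hk : 1 ≤ k)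
    (h : implicitAt σ (s :: U) ((Sum.elim (fun x => [x]) σ s).length + i) k) :
    implicitAt σ U i k := by
  obtain ⟨j, Y, hj, h1, h2⟩ := h
  set ℓ := (Sum.elim (fun x => [x]) σ s).length with hℓ
  cases j with
  | zero =>
    rw [List.take_succ_cons, List.take_zero, subApp_cons, subApp_nil, List.append_nil] at h2
    omega
  | succ j' =>
    rw [List.getElem?_cons_succ] at hj
    rw [List.take_succ_cons, subApp_cons, List.length_append, ← hℓ] at h1 h2
    exact ⟨j', Y, hj, by omega, by omega⟩

end SubApp

section Main
variable [DecidableEq Γ]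

lemma main_hom {a : Γ} {k : ℕ} (hk : 1 ≤ k) (σ σ' : 𝒳 → List Γ) (hne : ∀ X, σ X ≠ []) :
    ∀ U : List (Γ ⊕ 𝒳),
    (∀ X : 𝒳, Sum.inr X ∈ U → lead a (σ X) < k ∧ lead a (σ X).reverse < k) →
    (∀ X : 𝒳, Sum.inr X ∈ U → σ' X = delrun a k (hD a k (σ X))) →
    (∀ i, 1 ≤ i → maxBlockAt (subApp σ U) a k i → implicitAt σ U i k) →
    hD a k (subApp σ U) = subApp σ' U := by
  intro U
  induction U with
  | nil => intro _ _ _; rw [subApp_nil, subApp_nil, hD_nil]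
  | cons s U ih =>
    intro hA hσ' hB
    have hA' : ∀ X : 𝒳, Sum.inr X ∈ U → lead a (σ X) < k ∧ lead a (σ X).reverse < k :=
      fun X hX => hA X (List.mem_cons_of_mem _ hX)
    have hσ'' : ∀ X : 𝒳, Sum.inr X ∈ U → σ' X = delrun a k (hD a k (σ X)) :=
      fun X hX => hσ' X (List.mem_cons_of_mem _ hX)
    have hB' : ∀ i, 1 ≤ i → maxBlockAt (subApp σ U) a k i → implicitAt σ U i k := by
      intro i hi hb
      have hb2 : maxBlockAt (subApp σ (s :: U)) a k
          ((Sum.elim (fun x => [x]) σ s).length + i) := by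
        rw [subApp_cons]
        exact block_append_left hi hb
      have hpl := piece_len_pos hne s
      have himp := hB _ (by omega) hb2
      exact implicit_tail hk himp
    have IH := ih hA' hσ'' hB'
    cases s with
    | inl x =>
      rw [subApp_inl, subApp_inl]
      by_cases hx : x = a
      · subst hx; rw [hD_cons_self, IH]
      · rw [hD_cons_ne hx]
        have hlw : lead a (subApp σ U) ≠ k := by
          intro hl
          have hb1 : maxBlockAt (subApp σ (Sum.inl x :: U)) a k 1 := by
            rw [subApp_inl]; exact block_one_of_lead hx hl
          obtain ⟨j, Y, hj, h1, h2⟩ := hB 1 le_rfl hb1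
          cases j with
          | zero => simp at hj
          | succ j' =>
            rw [List.getElem?_cons_succ] at hj
            rw [List.take_succ_cons, subApp_cons] at h1
            simp only [Sum.elim_inl, List.length_append, List.length_cons,
              List.length_nil] at h1
            have hj'len : j' < U.length := by
              by_contra hcon
              rw [List.getElem?_eq_none (by omega)] at hj
              simp at hj
            have hlow := subApp_take_len_lower hne U j' (by omega)
            have hj'0 : j' = 0 := by omega
            subst hj'0
            cases U with
            | nil => simp at hj
            | cons s₂ U₂ =>
              rw [List.getElem?_cons_zero] at hj
              have hs₂ : s₂ = Sum.inr Y := by injection hj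
              subst hs₂
              rw [List.take_succ_cons, List.take_succ_cons, List.take_zero] at h2
              rw [subApp_cons, subApp_cons, subApp_nil] at h2
              simp only [Sum.elim_inl, Sum.elim_inr, List.append_nil, List.length_append,
                List.length_cons, List.length_nil] at h2
              have hkY : k ≤ (σ Y).length := by omega
              have htk : (σ Y).take k = List.replicate k a := by
                have h3 := take_lead_eq (subApp σ (Sum.inr Y :: U₂)) k (le_of_eq hl.symm)
                rw [subApp_inr, List.take_append_of_le_length hkY] at h3
                exact h3
              have h4 := lead_ge_of_take _ k htk
              have h5 := (hA Y (by simp)).1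
              omega
        rw [delrun_of_ne _ (by rw [lead_hD]; exact hlw), IH]
    | inr X =>
      rw [subApp_inr, subApp_inr, hσ' X (by simp)]
      obtain ⟨hlv, hlr⟩ := hA X (by simp)
      set v := σ X with hv
      set w := subApp σ U with hw
      set t := lead a v.reverse with htdef
      have hrt : v.reverse.take t = List.replicate t a := take_lead_eq _ t le_rfl
      have hrsplit : v.reverse = List.replicate t a ++ v.reverse.drop t := by
        conv_lhs => rw [← List.take_append_drop t v.reverse]
        rw [hrt]
      have hvα : v = (v.reverse.drop t).reverse ++ List.replicate t a := by
        conv_lhs => rw [← v.reverse_reverse, hrsplit]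
        rw [List.reverse_append, List.reverse_replicate]
      set α := (v.reverse.drop t).reverse with hα
      by_cases hαnil : α = []
      · have hveq : v = List.replicate t a := by rw [hvα, hαnil, List.nil_append]
        have htk : t ≠ k := by omega
        rw [hveq, hD_replicate_append]
        have hDrep : hD a k (List.replicate t a) = List.replicate t a := by
          have h6 := hD_replicate_append (a := a) (k := k) t ([] : List Γ)
          simpa using h6
        rw [hDrep, delrun_of_ne _ (by rw [lead_replicate]; exact htk), IH]
      · have hga : α.getLast? ≠ some a := by
          rw [hα, List.getLast?_reverse, List.head?_drop]
          exact htdef ▸ getElem_lead v.reverse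
        set x := α.getLast hαnil with hxdef
        have hxga : α.getLast? = some x := List.getLast?_eq_getLast hαnil
        have hxne : x ≠ a := fun h => hga (by rw [hxga, h])
        set β := α.dropLast with hβ
        have hαβ : α = β ++ [x] := (List.dropLast_append_getLast hαnil).symm
        have htk : t ≠ k := by omega
        have hDrep : delrun a k (List.replicate t a) = List.replicate t a :=
          delrun_of_ne _ (by rw [lead_replicate]; exact htk)
        have hDv : hD a k v = hD a k (β ++ [x]) ++ List.replicate t a := by
          conv_lhs => rw [hvα, hαβ, List.append_assoc]
          rw [show ([x] : List Γ) ++ List.replicate t a = x :: List.replicate t a from rfl]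
          rw [hD_append_last hxne]
          have h7 : hD a k (List.replicate t a) = List.replicate t a := by
            have h8 := hD_replicate_append (a := a) (k := k) t ([] : List Γ)
            simpa using h8
          rw [h7, hDrep]
        have hsplit : v ++ w = β ++ x :: (List.replicate t a ++ w) := by
          rw [hvα, hαβ]; simp
        have hlv2 : lead a (hD a k v) ≠ k := by rw [lead_hD]; omega
        have hαlen : 1 ≤ α.length := List.length_pos_iff.2 hαnil
        have hvlen : v.length = α.length + t := by
          conv_lhs => rw [hvα]
          simp
        have hvw : v ++ w = α ++ (List.replicate t a ++ w) := by
          rw [hvα, List.append_assoc]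
        have hrun : lead a (List.replicate t a ++ hD a k w) ≠ k := by
          rw [lead_replicate_append, lead_hD]
          intro hsum
          set lw := lead a w with hlwdef
          have hlww := lead_le_length (a := a) w
          have hb : maxBlockAt (v ++ w) a k α.length := by
            refine ⟨⟨?_, ?_⟩, ?_, ?_⟩
            · rw [List.length_replicate, List.length_append, hvlen]; omega
            · rw [List.length_replicate, hvw, List.drop_left]
              rw [← hsum,
                show t + lw = (List.replicate t a : List Γ).length + lw by
                  rw [List.length_replicate],
                List.take_append, List.take_of_length_le (Nat.le_add_right _ _),
                Nat.add_sub_cancel_left, take_lead_eq w lw le_rfl, List.length_replicate,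
                ← List.replicate_add]
            · intro p hp
              rw [hvw, List.getElem?_append, if_pos (by omega)]
              have hpeq : p = α.length - 1 := by omega
              rw [hpeq, ← List.getLast?_eq_getElem?]
              exact hga
            · rw [hvw, List.getElem?_append_right (by omega), Nat.add_sub_cancel_left,
                ← hsum, show t + lw = (List.replicate t a : List Γ).length + lw by
                  rw [List.length_replicate],
                List.getElem?_append_right (by omega), Nat.add_sub_cancel_left]
              exact getElem_lead w
          have himp := hB α.length (by omega) (by rw [subApp_inr]; exact hb)
          obtain ⟨j, Y, hj, h1, h2⟩ := himp
          cases j with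
          | zero =>
            rw [List.take_succ_cons, List.take_zero, subApp_cons, subApp_nil,
              List.append_nil] at h2
            simp only [Sum.elim_inr] at h2
            rw [← hv] at h2
            omega
          | succ j' =>
            rw [List.getElem?_cons_succ] at hj
            rw [List.take_succ_cons, subApp_cons] at h1
            simp only [Sum.elim_inr, List.length_append] at h1
            rw [← hv] at h1
            have hj'len : j' < U.length := by
              by_contra hcon
              rw [List.getElem?_eq_none (by omega)] at hj
              simp at hj
            have hlow := subApp_take_len_lower hne U j' (by omega)
            have hj'0 : j' = 0 := by omega
            have ht0 : t = 0 := by omega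
            subst hj'0
            cases U with
            | nil => simp at hj
            | cons s₂ U₂ =>
              rw [List.getElem?_cons_zero] at hj
              have hs₂ : s₂ = Sum.inr Y := by injection hj
              subst hs₂
              rw [List.take_succ_cons, List.take_succ_cons, List.take_zero] at h2
              rw [subApp_cons, subApp_cons, subApp_nil] at h2
              simp only [Sum.elim_inr, List.append_nil, List.length_append] at h2
              rw [← hv] at h2
              have hkY : k ≤ (σ Y).length := by omega
              have hwtake : w.take k = List.replicate k a := by
                have h9 := take_lead_eq (a := a) w k (by omega)
                exact h9
              have htkY : (σ Y).take k = List.replicate k a := by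
                rw [hw, subApp_inr] at hwtake
                rwa [List.take_append_of_le_length hkY] at hwtake
              have h10 := lead_ge_of_take _ k htkY
              have h11 := (hA' Y (by simp)).1
              omega
        rw [hsplit, hD_append_last hxne, hD_replicate_append, delrun_of_ne _ hrun, IH,
          delrun_of_ne _ hlv2, hDv, List.append_assoc]

end Main

/-- For a length-minimal solution σ of U = V (both sides beginning and ending with a letter),
every maximal block a^k of σ(U) has an occurrence in σ(U) or σ(V) that is explicit or
crossing (= neither explicit nor implicit), or a^k is a prefix or suffix of some σ(X). -/
theorem stmt6 (U V : List (Γ ⊕ 𝒳)) (σ : 𝒳 → List Γ)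
    (hUhead : ∃ x : Γ, U.head? = some (Sum.inl x))
    (hUlast : ∃ x : Γ, U.getLast? = some (Sum.inl x))
    (hVhead : ∃ x : Γ, V.head? = some (Sum.inl x))
    (hVlast : ∃ x : Γ, V.getLast? = some (Sum.inl x))
    (hsol : subApp σ U = subApp σ V)
    (hne : ∀ X : 𝒳, σ X ≠ [])
    (hmin : ∀ σ' : 𝒳 → List Γ, (∀ X : 𝒳, σ' X ≠ []) → subApp σ' U = subApp σ' V →
      (subApp σ U).length ≤ (subApp σ' U).length)
    (a : Γ) (k : ℕ) (hk : 1 ≤ k)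
    (hblock : ∃ i, maxBlockAt (subApp σ U) a k i) :
    (∃ i, maxBlockAt (subApp σ U) a k i ∧
      (explicitAt σ U i k ∨ (¬ explicitAt σ U i k ∧ ¬ implicitAt σ U i k))) ∨
    (∃ i, maxBlockAt (subApp σ V) a k i ∧
      (explicitAt σ V i k ∨ (¬ explicitAt σ V i k ∧ ¬ implicitAt σ V i k))) ∨
    (∃ X : 𝒳, (Sum.inr X ∈ U ∨ Sum.inr X ∈ V) ∧
      (List.replicate k a <+: σ X ∨ List.replicate k a <:+ σ X)) := by
  classical
  by_contra hcon
  have hUneg : ¬ ∃ i, maxBlockAt (subApp σ U) a k i ∧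
      (explicitAt σ U i k ∨ (¬ explicitAt σ U i k ∧ ¬ implicitAt σ U i k)) :=
    fun h => hcon (Or.inl h)
  have hVneg : ¬ ∃ i, maxBlockAt (subApp σ V) a k i ∧
      (explicitAt σ V i k ∨ (¬ explicitAt σ V i k ∧ ¬ implicitAt σ V i k)) :=
    fun h => hcon (Or.inr (Or.inl h))
  have hXneg : ¬ ∃ X : 𝒳, (Sum.inr X ∈ U ∨ Sum.inr X ∈ V) ∧
      (List.replicate k a <+: σ X ∨ List.replicate k a <:+ σ X) :=
    fun h => hcon (Or.inr (Or.inr h))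
  clear hcon
  have hBU : ∀ i, maxBlockAt (subApp σ U) a k i → implicitAt σ U i k := by
    intro i hb
    by_cases he : explicitAt σ U i k
    · exact absurd ⟨i, hb, Or.inl he⟩ hUneg
    · by_contra himp
      exact absurd ⟨i, hb, Or.inr ⟨he, himp⟩⟩ hUneg
  have hBV : ∀ i, maxBlockAt (subApp σ V) a k i → implicitAt σ V i k := by
    intro i hb
    by_cases he : explicitAt σ V i k
    · exact absurd ⟨i, hb, Or.inl he⟩ hVneg
    · by_contra himp
      exact absurd ⟨i, hb, Or.inr ⟨he, himp⟩⟩ hVneg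
  have hA : ∀ X : 𝒳, (Sum.inr X ∈ U ∨ Sum.inr X ∈ V) →
      lead a (σ X) < k ∧ lead a (σ X).reverse < k := by
    intro X hX
    constructor
    · by_contra h
      have hle : k ≤ lead a (σ X) := by omega
      have ht := take_lead_eq (σ X) k hle
      exact hXneg ⟨X, hX, Or.inl (ht ▸ List.take_prefix k (σ X))⟩
    · by_contra h
      have hle : k ≤ lead a (σ X).reverse := by omega
      have ht := take_lead_eq (σ X).reverse k hle
      have hpre : List.replicate k a <+: (σ X).reverse := ht ▸ List.take_prefix k (σ X).reverse
      rw [← List.reverse_replicate] at hpre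
      exact hXneg ⟨X, hX, Or.inr (List.reverse_prefix.1 hpre)⟩
  -- the block occurs at a position ≥ 1
  obtain ⟨i, hbi⟩ := hblock
  have hi1 : 1 ≤ i := by
    by_contra h
    have hi0 : i = 0 := by omega
    subst hi0
    obtain ⟨j, Y, hj, h1, h2⟩ := hBU 0 hbi
    obtain ⟨x₀, hx₀⟩ := hUhead
    cases U with
    | nil => simp at hx₀
    | cons s U' =>
      rw [List.head?_cons] at hx₀
      have hs : s = Sum.inl x₀ := by injection hx₀
      subst hs
      cases j with
      | zero => simp at hj
      | succ j' =>
        rw [List.take_succ_cons, subApp_cons] at h1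
        simp only [Sum.elim_inl, List.length_append, List.length_cons, List.length_nil] at h1
        omega
  have hstrict := hD_length_lt hk (subApp σ U) i hi1 hbi
  -- the modified solution
  letI : DecidablePred (fun Y : 𝒳 => Sum.inr Y ∈ U ∨ Sum.inr Y ∈ V) :=
    fun Y => Classical.propDecidable _
  set σ'' : 𝒳 → List Γ := fun Y =>
    if Sum.inr Y ∈ U ∨ Sum.inr Y ∈ V then delrun a k (hD a k (σ Y)) else σ Y with hσ''
  have hσ'pos : ∀ X : 𝒳, (Sum.inr X ∈ U ∨ Sum.inr X ∈ V) →
      σ'' X = delrun a k (hD a k (σ X)) := by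
    intro X hX
    show (if Sum.inr X ∈ U ∨ Sum.inr X ∈ V then delrun a k (hD a k (σ X)) else σ X) = _
    rw [if_pos hX]
  have hmainU := main_hom hk σ σ'' hne U (fun X h => hA X (Or.inl h))
    (fun X h => hσ'pos X (Or.inl h)) (fun i _ hb => hBU i hb)
  have hmainV := main_hom hk σ σ'' hne V (fun X h => hA X (Or.inr h))
    (fun X h => hσ'pos X (Or.inr h)) (fun i _ hb => hBV i hb)
  have heqV : subApp σ'' U = subApp σ'' V := by rw [← hmainU, ← hmainV, hsol]
  have hne'' : ∀ Y : 𝒳, σ'' Y ≠ [] := by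
    intro Y
    by_cases hy : Sum.inr Y ∈ U ∨ Sum.inr Y ∈ V
    · rw [hσ'pos Y hy]
      obtain ⟨h1, h2⟩ := hA Y hy
      by_cases hall : ∀ b ∈ σ Y, b = a
      · have hrep : σ Y = List.replicate (σ Y).length a := List.eq_replicate_of_mem hall
        have hlen1 : lead a (σ Y) = (σ Y).length := by
          conv_lhs => rw [hrep]
          exact lead_replicate _
        have hDrep : hD a k (σ Y) = σ Y := by
          conv_lhs => rw [hrep]
          have h3 := hD_replicate_append (a := a) (k := k) (σ Y).length ([] : List Γ)
          simp only [hD_nil, List.append_nil] at h3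
          rw [h3, ← hrep]
        rw [hDrep, delrun_of_ne _ (by omega)]
        exact hne Y
      · push_neg at hall
        obtain ⟨b, hb, hba⟩ := hall
        exact List.ne_nil_of_mem (mem_delrun hba _ (mem_hD hba _ hb))
    · show (if Sum.inr Y ∈ U ∨ Sum.inr Y ∈ V then delrun a k (hD a k (σ Y)) else σ Y) ≠ []
      rw [if_neg hy]
      exact hne Y
  have hlen := hmin σ'' hne'' heqV
  rw [← hmainU] at hlen
  omega
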